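/- Let k be a field containing a primitive n-th root of unity ω, and let the cyclic group ℤ/n act on k[x,y] by x ↦ ωx, y ↦ ω^{-1}y. Then the invariant ring k[x,y]^{ℤ/n} is generated as a k-algebra by u = xⁿ, v = yⁿ, and z = xy, and is isomorphic to k[U,V,Z]/(UV − Zⁿ). -/

import Mathlib

open MvPolynomial

/-- The generator of the `ℤ/n`-action on `k[x,y]`: the `k`-algebra automorphism (here, an
algebra endomorphism) determined by `x ↦ ωx`, `y ↦ ω⁻¹y`. -/
noncomputable def cyclicGen (k : Type) [Field k] (ω : k) :
    MvPolynomial (Fin 2) k →ₐ[k] MvPolynomial (Fin 2) k :=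
  aeval ![C ω * X 0, C ω⁻¹ * X 1]

variable {k : Type} [Field k]

lemma cyclicGen_monomial (ω : k) (d : Fin 2 →₀ ℕ) (c : k) :
    cyclicGen k ω (monomial d c) = monomial d (ω ^ d 0 * ω⁻¹ ^ d 1 * c) := by
  rw [cyclicGen, aeval_monomial, monomial_eq,
    Finsupp.prod_fintype _ _ (fun i => pow_zero _),
    Finsupp.prod_fintype _ _ (fun i => pow_zero _)]
  simp only [Fin.prod_univ_two, Matrix.cons_val_zero, Matrix.cons_val_one, Matrix.head_cons,
    algebraMap_eq, map_mul, map_pow, mul_pow]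
  ring

lemma coeff_cyclicGen (ω : k) (p : MvPolynomial (Fin 2) k) (d : Fin 2 →₀ ℕ) :
    coeff d (cyclicGen k ω p) = ω ^ d 0 * ω⁻¹ ^ d 1 * coeff d p := by
  induction p using MvPolynomial.induction_on' with
  | monomial d' c =>
      rw [cyclicGen_monomial, coeff_monomial, coeff_monomial]
      rcases eq_or_ne d' d with rfl | h
      · simp
      · simp [h]
  | add p q hp hq => simp [map_add, hp, hq, mul_add]

lemma pow_mul_pow_mem (n : ℕ) {a b : ℕ} (h : a ≡ b [MOD n]) :
    (X 0 : MvPolynomial (Fin 2) k) ^ a * X 1 ^ b ∈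
      Algebra.adjoin k {(X 0 ^ n : MvPolynomial (Fin 2) k), X 1 ^ n, X 0 * X 1} := by
  have hx : (X 0 ^ n : MvPolynomial (Fin 2) k) ∈ Algebra.adjoin k {(X 0 ^ n : MvPolynomial (Fin 2) k), X 1 ^ n, X 0 * X 1} :=
    Algebra.subset_adjoin (by simp)
  have hy : (X 1 ^ n : MvPolynomial (Fin 2) k) ∈ Algebra.adjoin k {(X 0 ^ n : MvPolynomial (Fin 2) k), X 1 ^ n, X 0 * X 1} :=
    Algebra.subset_adjoin (by simp)
  have hz : (X 0 * X 1 : MvPolynomial (Fin 2) k) ∈ Algebra.adjoin k {(X 0 ^ n : MvPolynomial (Fin 2) k), X 1 ^ n, X 0 * X 1} :=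
    Algebra.subset_adjoin (by simp)
  rcases le_total a b with hab | hab
  · obtain ⟨m, hm⟩ := (Nat.modEq_iff_dvd' hab).mp h
    have hb : b = a + n * m := by omega
    subst hb
    have : (X 0 : MvPolynomial (Fin 2) k) ^ a * X 1 ^ (a + n * m)
        = (X 0 * X 1) ^ a * (X 1 ^ n) ^ m := by
      rw [mul_pow, ← pow_mul, pow_add]; ring
    rw [this]
    exact mul_mem (pow_mem hz a) (pow_mem hy m)
  · obtain ⟨m, hm⟩ := (Nat.modEq_iff_dvd' hab).mp h.symm
    have hb : a = b + n * m := by omega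
    subst hb
    have : (X 0 : MvPolynomial (Fin 2) k) ^ (b + n * m) * X 1 ^ b
        = (X 0 * X 1) ^ b * (X 0 ^ n) ^ m := by
      rw [mul_pow, ← pow_mul, pow_add]; ring
    rw [this]
    exact mul_mem (pow_mem hz b) (pow_mem hx m)

lemma modEq_of_pow_eq {n : ℕ} (hn : 0 < n) {ω : k} (hω : IsPrimitiveRoot ω n)
    (hω0 : ω ≠ 0) {a b : ℕ} (h : ω ^ a = ω ^ b) : a ≡ b [MOD n] := by
  have key : ∀ a b : ℕ, a ≤ b → ω ^ a = ω ^ b → a ≡ b [MOD n] := by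
    intro a b hab h
    have h1 : ω ^ a * ω ^ (b - a) = ω ^ a * 1 := by
      rw [mul_one, ← pow_add, Nat.add_sub_cancel' hab, h]
    have h2 : ω ^ (b - a) = 1 := mul_left_cancel₀ (pow_ne_zero _ hω0) h1
    exact (Nat.modEq_iff_dvd' hab).mpr (hω.pow_eq_one_iff_dvd _ |>.mp h2)
  rcases le_total a b with hab | hab
  · exact key a b hab h
  · exact (key b a hab h.symm).symm

lemma part1 (n : ℕ) (hn : 0 < n) (ω : k) (hω : IsPrimitiveRoot ω n) :
    AlgHom.equalizer (cyclicGen k ω) (AlgHom.id k (MvPolynomial (Fin 2) k)) =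
      Algebra.adjoin k {(X 0 ^ n : MvPolynomial (Fin 2) k), X 1 ^ n, X 0 * X 1} := by
  have hω0 : ω ≠ 0 := by
    intro h
    have := hω.pow_eq_one
    rw [h, zero_pow hn.ne'] at this
    exact zero_ne_one this
  apply le_antisymm
  · intro p hp
    rw [AlgHom.mem_equalizer, AlgHom.id_apply] at hp
    have hcoeff : ∀ d ∈ p.support, (d : Fin 2 →₀ ℕ) 0 ≡ d 1 [MOD n] := by
      intro d hd
      have h1 : ω ^ d 0 * ω⁻¹ ^ d 1 * coeff d p = coeff d p := by
        rw [← coeff_cyclicGen, hp]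
      have hc : coeff d p ≠ 0 := mem_support_iff.mp hd
      have h3 : ω ^ d 0 = ω ^ d 1 := by
        have h2 : ω ^ d 0 * ω⁻¹ ^ d 1 * coeff d p * ω ^ d 1 = coeff d p * ω ^ d 1 := by
          rw [h1]
        rw [inv_pow] at h2
        field_simp at h2
        exact h2
      exact modEq_of_pow_eq hn hω hω0 h3
    nth_rewrite 1 [p.as_sum]
    apply Subalgebra.sum_mem
    intro d hd
    have : (monomial d) (coeff d p) = C (coeff d p) * (X 0 ^ d 0 * X 1 ^ d 1) := by
      rw [monomial_eq, Finsupp.prod_fintype _ _ (fun i => pow_zero _), Fin.prod_univ_two]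
    rw [this]
    exact mul_mem (Subalgebra.algebraMap_mem _ _) (pow_mul_pow_mem n (hcoeff d hd))
  · rw [Algebra.adjoin_le_iff]
    intro q hq
    simp only [Set.mem_insert_iff, Set.mem_singleton_iff] at hq
    have hX0 : cyclicGen k ω (X 0) = C ω * X 0 := by
      rw [cyclicGen, aeval_X]; rfl
    have hX1 : cyclicGen k ω (X 1) = C ω⁻¹ * X 1 := by
      rw [cyclicGen, aeval_X]; rfl
    rcases hq with rfl | rfl | rfl <;>
      rw [SetLike.mem_coe, AlgHom.mem_equalizer, AlgHom.id_apply]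
    · rw [map_pow, hX0, mul_pow, ← map_pow, hω.pow_eq_one, map_one, one_mul]
    · rw [map_pow, hX1, mul_pow, ← map_pow, inv_pow, hω.pow_eq_one, inv_one, map_one, one_mul]
    · rw [map_mul, hX0, hX1]
      rw [mul_mul_mul_comm, ← C_mul, mul_inv_cancel₀ hω0, C_1, one_mul]

noncomputable def phi13 (k : Type) [Field k] (n : ℕ) :
    MvPolynomial (Fin 3) k →ₐ[k] MvPolynomial (Fin 2) k :=
  aeval ![X 0 ^ n, X 1 ^ n, X 0 * X 1]

noncomputable def E13 (n : ℕ) (d : Fin 3 →₀ ℕ) : Fin 2 →₀ ℕ :=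
  Finsupp.single 0 (n * d 0 + d 2) + Finsupp.single 1 (n * d 1 + d 2)

lemma E13_apply0 (n : ℕ) (d : Fin 3 →₀ ℕ) : E13 n d 0 = n * d 0 + d 2 := by
  simp [E13, Finsupp.single_apply]

lemma E13_apply1 (n : ℕ) (d : Fin 3 →₀ ℕ) : E13 n d 1 = n * d 1 + d 2 := by
  simp [E13, Finsupp.single_apply]

lemma phi13_monomial (n : ℕ) (d : Fin 3 →₀ ℕ) (c : k) :
    phi13 k n (monomial d c) = monomial (E13 n d) c := by
  rw [phi13, aeval_monomial, monomial_eq,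
    Finsupp.prod_fintype _ _ (fun i => pow_zero _),
    Finsupp.prod_fintype _ _ (fun i => pow_zero _)]
  simp only [Fin.prod_univ_three, Fin.prod_univ_two, Matrix.cons_val_zero, Matrix.cons_val_one,
    Matrix.head_cons, Matrix.cons_val_two, Matrix.tail_cons, algebraMap_eq,
    E13_apply0, E13_apply1, mul_pow, ← pow_mul]
  rw [pow_add, pow_add]
  ring

lemma E13_inj {n : ℕ} (hn : 0 < n) {d d' : Fin 3 →₀ ℕ}
    (hd : d 0 = 0 ∨ d 1 = 0) (hd' : d' 0 = 0 ∨ d' 1 = 0)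
    (h : E13 n d = E13 n d') : d = d' := by
  have h0 : n * d 0 + d 2 = n * d' 0 + d' 2 := by
    rw [← E13_apply0 n d, ← E13_apply0 n d', h]
  have h1 : n * d 1 + d 2 = n * d' 1 + d' 2 := by
    rw [← E13_apply1 n d, ← E13_apply1 n d', h]
  have hz : (n : ℤ) * ((d 0 : ℤ) - d 1) = n * ((d' 0 : ℤ) - d' 1) := by
    have c0 : (n : ℤ) * d 0 + d 2 = n * d' 0 + d' 2 := by exact_mod_cast h0
    have c1 : (n : ℤ) * d 1 + d 2 = n * d' 1 + d' 2 := by exact_mod_cast h1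
    linarith
  have hz' : (d 0 : ℤ) - d 1 = (d' 0 : ℤ) - d' 1 :=
    mul_left_cancel₀ (by exact_mod_cast hn.ne' : (n : ℤ) ≠ 0) hz
  have e0 : d 0 = d' 0 := by omega
  have e1 : d 1 = d' 1 := by omega
  have e2 : d 2 = d' 2 := by
    rw [e0] at h0; omega
  ext i
  fin_cases i
  · exact e0
  · exact e1
  · exact e2

lemma key13 (e : Fin 3 →₀ ℕ) (c : k) :
    monomial e c = C c * X 0 ^ e 0 * X 1 ^ e 1 * X 2 ^ e 2 := by
  rw [monomial_eq, Finsupp.prod_fintype _ _ (fun i => pow_zero _), Fin.prod_univ_three]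
  ring

lemma exists_reduction (n : ℕ) (p : MvPolynomial (Fin 3) k) :
    ∃ r : MvPolynomial (Fin 3) k,
      p - r ∈ Ideal.span {(X 0 * X 1 - X 2 ^ n : MvPolynomial (Fin 3) k)} ∧
      ∀ d ∈ r.support, d 0 = 0 ∨ d 1 = 0 := by
  induction p using MvPolynomial.induction_on' with
  | monomial d c =>
      set m := min (d 0) (d 1) with hm
      set d' : Fin 3 →₀ ℕ :=
        Finsupp.single 0 (d 0 - m) + Finsupp.single 1 (d 1 - m) + Finsupp.single 2 (d 2 + n * m)
        with hd'
      have hd'0 : d' 0 = d 0 - m := by simp [hd', Finsupp.single_apply]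
      have hd'1 : d' 1 = d 1 - m := by simp [hd', Finsupp.single_apply]
      have hd'2 : d' 2 = d 2 + n * m := by simp [hd', Finsupp.single_apply]
      refine ⟨monomial d' c, ?_, ?_⟩
      · rw [Ideal.mem_span_singleton]
        have hdiff : monomial d c - monomial d' c
            = (C c * X 0 ^ (d 0 - m) * X 1 ^ (d 1 - m) * X 2 ^ (d 2)) *
              ((X 0 * X 1) ^ m - (X 2 ^ n) ^ m) := by
          rw [key13, key13, hd'0, hd'1, hd'2]
          have h0 : d 0 = (d 0 - m) + m := (Nat.sub_add_cancel (min_le_left _ _)).symm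
          have h1 : d 1 = (d 1 - m) + m := (Nat.sub_add_cancel (min_le_right _ _)).symm
          nth_rewrite 1 [h0]
          nth_rewrite 1 [h1]
          rw [pow_add, pow_add, pow_add, pow_mul, mul_pow]
          ring
        rw [hdiff]
        exact Dvd.dvd.mul_left (sub_dvd_pow_sub_pow _ _ m) _
      · intro e he
        have := support_monomial_subset he
        rw [Finset.mem_singleton] at this
        subst this
        rw [hd'0, hd'1]
        rcases le_total (d 0) (d 1) with h | h
        · left; omega
        · right; omega
  | add p q hp hq =>
      obtain ⟨r1, hr1, hred1⟩ := hp
      obtain ⟨r2, hr2, hred2⟩ := hq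
      refine ⟨r1 + r2, ?_, ?_⟩
      · have : p + q - (r1 + r2) = (p - r1) + (q - r2) := by ring
        rw [this]
        exact add_mem hr1 hr2
      · intro d hd
        rcases Finset.mem_union.mp (MvPolynomial.support_add hd) with h | h
        · exact hred1 d h
        · exact hred2 d h

lemma reduced_eq_zero {n : ℕ} (hn : 0 < n) (r : MvPolynomial (Fin 3) k)
    (hred : ∀ d ∈ r.support, d 0 = 0 ∨ d 1 = 0) (h : phi13 k n r = 0) : r = 0 := by
  by_contra hr
  obtain ⟨d₀, hd₀⟩ := exists_coeff_ne_zero hr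
  have hd₀s : d₀ ∈ r.support := mem_support_iff.mpr hd₀
  have hphi : phi13 k n r = ∑ d ∈ r.support, monomial (E13 n d) (coeff d r) := by
    nth_rewrite 1 [r.as_sum]
    rw [map_sum]
    exact Finset.sum_congr rfl fun d _ => phi13_monomial n d (coeff d r)
  have hc : coeff (E13 n d₀) (phi13 k n r) = coeff d₀ r := by
    rw [hphi, coeff_sum]
    rw [Finset.sum_eq_single d₀]
    · rw [coeff_monomial, if_pos rfl]
    · intro d hd hne
      rw [coeff_monomial, if_neg]
      intro hE
      exact hne (E13_inj hn (hred d hd) (hred d₀ hd₀s) hE)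
    · intro hds; exact absurd hd₀s hds
  rw [h, coeff_zero] at hc
  exact hd₀ hc.symm

lemma ker_phi13 (n : ℕ) (hn : 0 < n) :
    RingHom.ker (phi13 k n) = Ideal.span {(X 0 * X 1 - X 2 ^ n : MvPolynomial (Fin 3) k)} := by
  have hle : Ideal.span {(X 0 * X 1 - X 2 ^ n : MvPolynomial (Fin 3) k)} ≤ RingHom.ker (phi13 k n) := by
    rw [Ideal.span_le]
    intro q hq
    rw [Set.mem_singleton_iff] at hq
    subst hq
    rw [SetLike.mem_coe, RingHom.mem_ker, map_sub, map_mul, map_pow]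
    rw [phi13, aeval_X, aeval_X, aeval_X]
    simp only [Matrix.cons_val_zero, Matrix.cons_val_one, Matrix.head_cons,
      Matrix.cons_val_two, Matrix.tail_cons]
    rw [mul_pow]
    ring
  apply le_antisymm _ hle
  intro p hp
  rw [RingHom.mem_ker] at hp
  obtain ⟨r, hr, hred⟩ := exists_reduction n p
  have hφr : phi13 k n r = 0 := by
    have h1 : phi13 k n (p - r) = 0 := RingHom.mem_ker.mp (hle hr)
    rw [map_sub, hp, zero_sub, neg_eq_zero] at h1
    exact h1
  have : r = 0 := reduced_eq_zero hn r hred hφr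
  rw [this, sub_zero] at hr
  exact hr

lemma range_phi13 (n : ℕ) :
    (phi13 k n).range =
      Algebra.adjoin k {(X 0 ^ n : MvPolynomial (Fin 2) k), X 1 ^ n, X 0 * X 1} := by
  rw [phi13, ← Algebra.adjoin_range_eq_range_aeval]
  congr 1
  ext q
  simp only [Set.mem_range, Set.mem_insert_iff, Set.mem_singleton_iff]
  constructor
  · rintro ⟨i, rfl⟩
    fin_cases i <;> simp
  · rintro (rfl | rfl | rfl)
    · exact ⟨0, rfl⟩
    · exact ⟨1, rfl⟩
    · exact ⟨2, rfl⟩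

/-- Let `k` be a field containing a primitive `n`-th root of unity `ω`, and let `ℤ/n` act on
`k[x,y]` by `x ↦ ωx`, `y ↦ ω⁻¹y`.  Then the invariant ring `k[x,y]^{ℤ/n}` (the subalgebra
fixed by the generator of the action) is generated as a `k`-algebra by `u = xⁿ`, `v = yⁿ` and
`z = xy`, and is isomorphic to `k[U,V,Z]/(UV − Zⁿ)` via `U ↦ xⁿ`, `V ↦ yⁿ`, `Z ↦ xy`. -/
theorem stmt13 (k : Type) [Field k] (n : ℕ) (hn : 0 < n) (ω : k)
    (hω : IsPrimitiveRoot ω n) :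
    AlgHom.equalizer (cyclicGen k ω) (AlgHom.id k (MvPolynomial (Fin 2) k)) =
      Algebra.adjoin k {(X 0 ^ n : MvPolynomial (Fin 2) k), X 1 ^ n, X 0 * X 1} ∧
    ∃ e : (MvPolynomial (Fin 3) k ⧸
            Ideal.span {(X 0 * X 1 - X 2 ^ n : MvPolynomial (Fin 3) k)}) ≃ₐ[k]
          (AlgHom.equalizer (cyclicGen k ω) (AlgHom.id k (MvPolynomial (Fin 2) k))),
      ((e (Ideal.Quotient.mk _ (X 0)) : MvPolynomial (Fin 2) k) = X 0 ^ n) ∧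
      ((e (Ideal.Quotient.mk _ (X 1)) : MvPolynomial (Fin 2) k) = X 1 ^ n) ∧
      ((e (Ideal.Quotient.mk _ (X 2)) : MvPolynomial (Fin 2) k) = X 0 * X 1) := by
  have hpart1 := part1 n hn ω hω
  refine ⟨hpart1, ?_⟩
  set EQ := AlgHom.equalizer (cyclicGen k ω) (AlgHom.id k (MvPolynomial (Fin 2) k)) with hEQ
  have hmem : ∀ x, phi13 k n x ∈ EQ := by
    intro x
    have : phi13 k n x ∈ (phi13 k n).range := ⟨x, rfl⟩
    rw [range_phi13, ← hpart1] at this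
    exact this
  set ψ : MvPolynomial (Fin 3) k →ₐ[k] EQ := (phi13 k n).codRestrict EQ hmem
    with hψ
  have hsurj : Function.Surjective ψ := by
    rintro ⟨y, hy⟩
    have hy' : y ∈ (phi13 k n).range := by
      rw [range_phi13, ← hpart1]; exact hy
    obtain ⟨x, hx⟩ := hy'
    exact ⟨x, Subtype.ext hx⟩
  have hker : Ideal.span {(X 0 * X 1 - X 2 ^ n : MvPolynomial (Fin 3) k)} = RingHom.ker ψ := by
    rw [← ker_phi13 n hn]
    ext x
    simp only [RingHom.mem_ker]
    constructor
    · intro h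
      exact Subtype.ext h
    · intro h
      exact congrArg Subtype.val h
  refine ⟨(Ideal.quotientEquivAlgOfEq k hker).trans
    (Ideal.quotientKerAlgEquivOfSurjective hsurj), ?_, ?_, ?_⟩ <;>
  · have hq : ∀ x, (Ideal.quotientKerAlgEquivOfSurjective hsurj) (Ideal.Quotient.mk (RingHom.ker ψ) x) = ψ x :=
      fun x => Ideal.kerLiftAlg_mk ψ x
    rw [AlgEquiv.trans_apply, Ideal.quotientEquivAlgOfEq_mk, hq]
    show (phi13 k n) _ = _
    rw [phi13, aeval_X]
    simp
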